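/- Let S and K be nondegenerate even lattices. There exists an isomorphism of abelian groups γ : D_S → D_K with γ*q_K = −q_S if and only if there exists an even unimodular overlattice of S ⊕ K into which both S and K are primitively embedded. -/

import Mathlib

set_option linter.unusedSectionVars false
set_option maxHeartbeats 1000000


open Matrix

namespace DiscForm

variable {ι : Type} [Fintype ι] [DecidableEq ι]

/-- The bilinear pairing on `ℚ^ι` given by a Gram matrix `G`. -/
def pair (G : Matrix ι ι ℚ) (x y : ι → ℚ) : ℚ := x ⬝ᵥ G.mulVec y

/-- The inclusion `ℤ^ι →+ ℚ^ι`. -/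
def intChar (ι : Type) : (ι → ℤ) →+ (ι → ℚ) :=
  AddMonoidHom.compLeft (Int.castAddHom ℚ) ι

/-- The standard lattice `L = ℤ^ι` viewed inside `ℚ^ι`. -/
def L0 (ι : Type) : AddSubgroup (ι → ℚ) := (intChar ι).range

/-- The dual (with respect to the pairing given by `G`) of a subgroup of `ℚ^ι`:
all vectors pairing integrally with the subgroup.  Applied to `L0` it gives the
dual lattice `L^∨`. -/
def dualOf (G : Matrix ι ι ℚ) (S : AddSubgroup (ι → ℚ)) : AddSubgroup (ι → ℚ) where
  carrier := {x | ∀ y ∈ S, ∃ k : ℤ, pair G x y = k}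
  zero_mem' := by
    intro y hy
    exact ⟨0, by simp [pair]⟩
  add_mem' := by
    intro a b ha hb y hy
    obtain ⟨k₁, h₁⟩ := ha y hy
    obtain ⟨k₂, h₂⟩ := hb y hy
    refine ⟨k₁ + k₂, ?_⟩
    show pair G (a + b) y = _
    unfold pair at *
    rw [add_dotProduct, h₁, h₂]
    push_cast
    ring
  neg_mem' := by
    intro a ha y hy
    obtain ⟨k, h⟩ := ha y hy
    refine ⟨-k, ?_⟩
    show pair G (-a) y = _
    unfold pair at *
    rw [neg_dotProduct, h]
    push_cast
    ring

/-- The dual lattice `L^∨` of the standard lattice with Gram matrix `G`. -/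
def Ldual (G : Matrix ι ι ℚ) : AddSubgroup (ι → ℚ) := dualOf G (L0 ι)

/-- The discriminant group `D_L = L^∨ / L`. -/
def disc (G : Matrix ι ι ℚ) : Type _ :=
  Ldual G ⧸ ((L0 ι).addSubgroupOf (Ldual G))

instance (G : Matrix ι ι ℚ) : AddCommGroup (disc G) :=
  QuotientAddGroup.Quotient.addCommGroup _

/-- The projection `φ_L : L^∨ → D_L`. -/
def dmk (G : Matrix ι ι ℚ) : Ldual G →+ disc G :=
  QuotientAddGroup.mk' _

/-- A subgroup `A` of the discriminant group is isotropic when the discriminant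
quadratic form `q_L` vanishes on it, i.e. every representative `x ∈ L^∨` of a
class in `A` has `x·x ∈ 2ℤ`. -/
def Isotropic (G : Matrix ι ι ℚ) (A : AddSubgroup (disc G)) : Prop :=
  ∀ x : Ldual G, dmk G x ∈ A → ∃ k : ℤ, pair G x x = 2 * k

/-- The subgroup of `ℚ^ι` corresponding to a subgroup `A ⊆ D_L`: the preimage of
`A` under the projection `L^∨ → D_L`. -/
def toOver (G : Matrix ι ι ℚ) (A : AddSubgroup (disc G)) : AddSubgroup (ι → ℚ) :=
  ((A.comap (dmk G)).map (Ldual G).subtype)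

/-- `M` is an even overlattice of the standard lattice `L = ℤ^ι` (with Gram
matrix `G`): it contains `L`, is integral, and all its vectors have even norm
(such an `M` automatically lies in `L^∨`). -/
def EvenOverlattice (G : Matrix ι ι ℚ) (M : AddSubgroup (ι → ℚ)) : Prop :=
  L0 ι ≤ M ∧ (∀ x ∈ M, ∀ y ∈ M, ∃ k : ℤ, pair G x y = k) ∧
    (∀ x ∈ M, ∃ k : ℤ, pair G x x = 2 * k)

-- ====== auxiliary lemmas ======

lemma intChar_apply (v : ι → ℤ) (i : ι) : intChar ι v i = (v i : ℚ) := rfl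

lemma mem_L0_iff {x : ι → ℚ} : x ∈ L0 ι ↔ ∀ i, ∃ k : ℤ, x i = (k : ℚ) := by
  constructor
  · rintro ⟨v, rfl⟩ i; exact ⟨v i, rfl⟩
  · intro h
    choose v hv using h
    exact ⟨v, funext fun i => (hv i).symm⟩

lemma mem_Ldual {G : Matrix ι ι ℚ} {x : ι → ℚ} :
    x ∈ Ldual G ↔ ∀ y ∈ L0 ι, ∃ k : ℤ, pair G x y = k := Iff.rfl

lemma pair_comm (A : Matrix ι ι ℚ) (h : A.IsSymm) (x y : ι → ℚ) :
    pair A x y = pair A y x := by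
  unfold pair Matrix.mulVec dotProduct
  simp only [Finset.mul_sum]
  rw [Finset.sum_comm]
  refine Finset.sum_congr rfl fun j _ => Finset.sum_congr rfl fun i _ => ?_
  rw [← h.apply i j]
  ring

lemma pair_eq (A : Matrix ι ι ℚ) (h : A.IsSymm) (x y : ι → ℚ) :
    pair A x y = A.mulVec x ⬝ᵥ y := by
  rw [pair_comm A h x y]
  unfold pair
  rw [dotProduct_comm]

lemma pair_add_left (A : Matrix ι ι ℚ) (x x' y : ι → ℚ) :
    pair A (x + x') y = pair A x y + pair A x' y := by
  unfold pair; rw [add_dotProduct]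

lemma pair_add_right (A : Matrix ι ι ℚ) (x y y' : ι → ℚ) :
    pair A x (y + y') = pair A x y + pair A x y' := by
  unfold pair; rw [Matrix.mulVec_add, dotProduct_add]

lemma pair_sub_left (A : Matrix ι ι ℚ) (x x' y : ι → ℚ) :
    pair A (x - x') y = pair A x y - pair A x' y := by
  unfold pair; rw [sub_dotProduct]

lemma pair_zero_left (A : Matrix ι ι ℚ) (y : ι → ℚ) : pair A 0 y = 0 := by
  simp [pair]

lemma pair_zero_right (A : Matrix ι ι ℚ) (x : ι → ℚ) : pair A x 0 = 0 := by
  simp [pair]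

lemma pair_intChar (A : Matrix ι ι ℤ) (v w : ι → ℤ) :
    pair (A.map ((↑) : ℤ → ℚ)) (intChar ι v) (intChar ι w)
      = ((v ⬝ᵥ A.mulVec w : ℤ) : ℚ) := by
  unfold pair Matrix.mulVec dotProduct
  simp only [intChar_apply, Matrix.map_apply]
  push_cast
  ring

lemma L0_le_Ldual (A : Matrix ι ι ℤ) : L0 ι ≤ Ldual (A.map ((↑) : ℤ → ℚ)) := by
  rintro x ⟨v, rfl⟩ y ⟨w, rfl⟩
  exact ⟨v ⬝ᵥ A.mulVec w, pair_intChar A v w⟩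

lemma intChar_single (i : ι) (a : ℤ) :
    intChar ι (Pi.single i a) = Pi.single i (a : ℚ) := by
  funext j
  rw [intChar_apply]
  by_cases h : j = i
  · subst h; simp
  · simp [Pi.single_apply, h]

lemma mem_Ldual_iff (A : Matrix ι ι ℚ) (h : A.IsSymm) {x : ι → ℚ} :
    x ∈ Ldual A ↔ ∀ i, ∃ k : ℤ, A.mulVec x i = (k : ℚ) := by
  constructor
  · intro H i
    obtain ⟨k, hk⟩ := H (intChar ι (Pi.single i 1)) ⟨Pi.single i 1, rfl⟩
    refine ⟨k, ?_⟩
    rw [pair_eq A h, intChar_single] at hk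
    simpa using hk
  · intro H y hy
    obtain ⟨w, rfl⟩ := hy
    choose k hk using H
    refine ⟨∑ i, k i * w i, ?_⟩
    rw [pair_eq A h]
    unfold dotProduct
    push_cast
    exact Finset.sum_congr rfl fun i _ => by rw [hk i, intChar_apply]

lemma mem_Ldual_iff' (A : Matrix ι ι ℚ) (h : A.IsSymm) {x : ι → ℚ} :
    x ∈ Ldual A ↔ ∃ v : ι → ℤ, A.mulVec x = intChar ι v := by
  rw [mem_Ldual_iff A h]
  constructor
  · intro H
    choose v hv using H
    exact ⟨v, funext fun i => (hv i)⟩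
  · rintro ⟨v, hv⟩ i
    exact ⟨v i, by rw [hv]; rfl⟩

lemma invVec_mem_Ldual (A : Matrix ι ι ℚ) (h : A.IsSymm) (hd : IsUnit A.det)
    (v : ι → ℤ) : A⁻¹.mulVec (intChar ι v) ∈ Ldual A := by
  rw [mem_Ldual_iff A h]
  intro i
  rw [Matrix.mulVec_mulVec, Matrix.mul_nonsing_inv A hd, Matrix.one_mulVec]
  exact ⟨v i, rfl⟩

lemma mem_L0_of_pair_int (A : Matrix ι ι ℚ) (h : A.IsSymm) (hd : IsUnit A.det)
    {x : ι → ℚ} (hx : ∀ z ∈ Ldual A, ∃ k : ℤ, pair A x z = k) : x ∈ L0 ι := by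
  rw [mem_L0_iff]
  intro i
  obtain ⟨k, hk⟩ := hx _ (invVec_mem_Ldual A h hd (Pi.single i 1))
  refine ⟨k, ?_⟩
  rw [← hk]
  unfold pair
  rw [Matrix.mulVec_mulVec, Matrix.mul_nonsing_inv A hd, Matrix.one_mulVec,
    intChar_single]
  simp

lemma dmk_eq_zero_iff (G : Matrix ι ι ℚ) (x : Ldual G) :
    dmk G x = 0 ↔ (x : ι → ℚ) ∈ L0 ι := by
  show (QuotientAddGroup.mk x : disc G) = 0 ↔ _
  rw [QuotientAddGroup.eq_zero_iff, AddSubgroup.mem_addSubgroupOf]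

lemma dmk_eq_dmk_iff (G : Matrix ι ι ℚ) (x y : Ldual G) :
    dmk G x = dmk G y ↔ ((x : ι → ℚ) - y) ∈ L0 ι := by
  rw [← sub_eq_zero, ← map_sub, dmk_eq_zero_iff]
  norm_cast

lemma pair_int_of_even (A : Matrix ι ι ℚ) (hsym : A.IsSymm)
    {M : AddSubgroup (ι → ℚ)} (heven : ∀ x ∈ M, ∃ k : ℤ, pair A x x = 2 * k)
    {x y : ι → ℚ} (hx : x ∈ M) (hy : y ∈ M) : ∃ k : ℤ, pair A x y = k := by
  obtain ⟨a, ha⟩ := heven x hx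
  obtain ⟨b, hb⟩ := heven y hy
  obtain ⟨c, hc⟩ := heven (x + y) (add_mem hx hy)
  refine ⟨c - a - b, ?_⟩
  have expand : pair A (x + y) (x + y)
      = pair A x x + 2 * pair A x y + pair A y y := by
    rw [pair_add_left, pair_add_right, pair_add_right, pair_comm A hsym y x]
    ring
  rw [expand] at hc
  push_cast
  linarith

/-- Key density lemma: if every vector pairing integrally with `P` is integral,
then `P` contains the whole dual lattice. -/
lemma Ldual_le_of_perp (A : Matrix ι ι ℚ) (h : A.IsSymm) (hd : IsUnit A.det)
    (P : AddSubgroup (ι → ℚ)) (hPd : ∀ w ∈ P, w ∈ Ldual A)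
    (hperp : ∀ c : ι → ℚ, (∀ w ∈ P, ∃ k : ℤ, pair A c w = k) → c ∈ L0 ι) :
    ∀ x ∈ Ldual A, x ∈ P := by
  intro x₀ hx₀
  by_contra hx₀P
  have h0 : (QuotientAddGroup.mk' P x₀) ≠ 0 := by
    intro hcon
    rw [QuotientAddGroup.mk'_apply, QuotientAddGroup.eq_zero_iff] at hcon
    exact hx₀P hcon
  obtain ⟨χ, hχ⟩ := CharacterModule.exists_character_apply_ne_zero_of_ne_zero h0
  set χ' : (ι → ℚ) →+ AddCircle (1 : ℚ) := χ.comp (QuotientAddGroup.mk' P) with hχ'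
  -- rational lifts of the values of χ' on the basis of the dual lattice
  have hlift : ∀ i : ι, ∃ c : ℚ,
      (c : AddCircle (1:ℚ)) = χ' (A⁻¹.mulVec (intChar ι (Pi.single i 1))) :=
    fun i => Quotient.exists_rep _
  choose c hc using hlift
  -- the two homs (ι → ℤ) →+ AddCircle 1 agree
  have key : ∀ v : ι → ℤ,
      χ' (A⁻¹.mulVec (intChar ι v)) = ((c ⬝ᵥ intChar ι v : ℚ) : AddCircle (1:ℚ)) := by
    have e : χ'.comp ((Matrix.mulVecLin A⁻¹).toAddMonoidHom.comp (intChar ι))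
        = (↑(QuotientAddGroup.mk' (AddSubgroup.zmultiples (1:ℚ))) :
            ℚ →+ AddCircle (1:ℚ)).comp
          ({ toFun := fun v : ι → ℤ => c ⬝ᵥ intChar ι v,
             map_zero' := by simp,
             map_add' := by
               intro a b
               show c ⬝ᵥ intChar ι (a + b) = c ⬝ᵥ intChar ι a + c ⬝ᵥ intChar ι b
               rw [map_add, dotProduct_add] } : (ι → ℤ) →+ ℚ) := by
      apply AddMonoidHom.functions_ext
      intro i a
      have hs : (Pi.single i a : ι → ℤ) = a • (Pi.single i (1:ℤ)) := by
        funext j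
        by_cases hj : j = i
        · subst hj; simp
        · simp [Pi.single_apply, hj]
      simp only [hs, map_zsmul]
      congr 1
      · show χ' (A⁻¹.mulVec (intChar ι (Pi.single i 1)))
          = _
        rw [← hc i]
        show _ = (QuotientAddGroup.mk' (AddSubgroup.zmultiples (1:ℚ)))
          (c ⬝ᵥ intChar ι (Pi.single i 1))
        rw [intChar_single]
        simp
    intro v
    exact DFunLike.congr_fun e v
  -- χ' is given by pairing with c on the dual lattice
  have hpairing : ∀ w ∈ Ldual A,
      χ' w = ((pair A c w : ℚ) : AddCircle (1:ℚ)) := by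
    intro w hw
    obtain ⟨vw, hvw⟩ := (mem_Ldual_iff' A h).1 hw
    have hw' : w = A⁻¹.mulVec (intChar ι vw) := by
      rw [← hvw, Matrix.mulVec_mulVec, Matrix.nonsing_inv_mul A hd, Matrix.one_mulVec]
    have hp : pair A c w = c ⬝ᵥ intChar ι vw := by
      unfold pair; rw [hvw]
    rw [hp, ← key vw, ← hw']
  -- c pairs integrally with P
  have hcP : ∀ w ∈ P, ∃ k : ℤ, pair A c w = k := by
    intro w hw
    have hz : χ' w = 0 := by
      show χ ((QuotientAddGroup.mk' P) w) = 0
      have : (QuotientAddGroup.mk' P) w = 0 := by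
        rw [QuotientAddGroup.mk'_apply, QuotientAddGroup.eq_zero_iff]; exact hw
      rw [this, map_zero]
    rw [hpairing w (hPd w hw)] at hz
    rw [AddCircle.coe_eq_zero_iff] at hz
    obtain ⟨n, hn⟩ := hz
    exact ⟨n, by rw [← hn, zsmul_eq_mul, mul_one]⟩
  have hcL0 : c ∈ L0 ι := hperp c hcP
  -- but then χ' x₀ = 0, contradiction
  have : χ' x₀ = 0 := by
    rw [hpairing x₀ hx₀]
    obtain ⟨u, rfl⟩ := hcL0
    obtain ⟨v₀, hv₀⟩ := (mem_Ldual_iff' A h).1 hx₀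
    have : pair A (intChar ι u) x₀ = ((u ⬝ᵥ v₀ : ℤ) : ℚ) := by
      unfold pair
      rw [hv₀]
      unfold dotProduct
      push_cast
      rfl
    rw [this, AddCircle.coe_eq_zero_iff]
    exact ⟨u ⬝ᵥ v₀, by rw [zsmul_eq_mul, mul_one]⟩
  exact hχ (by rw [← this]; rfl)



section Blocks
variable {p q : ℕ}

lemma intChar_elim (v : Fin p → ℤ) (w : Fin q → ℤ) :
    intChar (Fin p ⊕ Fin q) (Sum.elim v w)
      = Sum.elim (intChar (Fin p) v) (intChar (Fin q) w) := by
  funext i; cases i <;> rfl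

lemma sum_elim_mem_L0 {u : Fin p → ℚ} {w : Fin q → ℚ}
    (hu : u ∈ L0 (Fin p)) (hw : w ∈ L0 (Fin q)) :
    Sum.elim u w ∈ L0 (Fin p ⊕ Fin q) := by
  obtain ⟨a, rfl⟩ := hu
  obtain ⟨b, rfl⟩ := hw
  exact ⟨Sum.elim a b, intChar_elim a b⟩

lemma mem_L0_sum {x : (Fin p ⊕ Fin q) → ℚ} (hx : x ∈ L0 (Fin p ⊕ Fin q)) :
    (x ∘ Sum.inl ∈ L0 (Fin p)) ∧ (x ∘ Sum.inr ∈ L0 (Fin q)) := by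
  rw [mem_L0_iff] at hx
  exact ⟨mem_L0_iff.2 fun i => hx (Sum.inl i), mem_L0_iff.2 fun j => hx (Sum.inr j)⟩

lemma pair_blocks (A : Matrix (Fin p) (Fin p) ℚ) (B : Matrix (Fin q) (Fin q) ℚ)
    (z w : (Fin p ⊕ Fin q) → ℚ) :
    pair (Matrix.fromBlocks A 0 0 B) z w
      = pair A (z ∘ Sum.inl) (w ∘ Sum.inl) + pair B (z ∘ Sum.inr) (w ∘ Sum.inr) := by
  unfold pair
  rw [← Sum.elim_comp_inl_inr z, ← Sum.elim_comp_inl_inr w, Matrix.fromBlocks_mulVec]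
  simp only [Sum.elim_comp_inl, Sum.elim_comp_inr, Matrix.zero_mulVec, add_zero, zero_add,
    sumElim_dotProduct_sumElim]

lemma fromBlocks_isSymm {A : Matrix (Fin p) (Fin p) ℚ} {B : Matrix (Fin q) (Fin q) ℚ}
    (hA : A.IsSymm) (hB : B.IsSymm) : (Matrix.fromBlocks A 0 0 B).IsSymm := by
  unfold Matrix.IsSymm at *
  rw [Matrix.fromBlocks_transpose, hA, hB]
  simp

end Blocks


/-- The graph of an isomorphism `γ : D_S → D_K` inside `ℚ^p ⊕ ℚ^q`. -/
def glueGroup {p q : ℕ} (A : Matrix (Fin p) (Fin p) ℚ) (B : Matrix (Fin q) (Fin q) ℚ)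
    (γ : disc A ≃+ disc B) : AddSubgroup ((Fin p ⊕ Fin q) → ℚ) where
  carrier := {z | ∃ (x : Ldual A) (y : Ldual B),
      γ (dmk A x) = dmk B y ∧ z = Sum.elim (x : Fin p → ℚ) (y : Fin q → ℚ)}
  zero_mem' := ⟨0, 0, by rw [map_zero, map_zero, map_zero], by
      funext i; cases i <;> simp⟩
  add_mem' := by
    rintro a b ⟨xa, ya, ha, rfl⟩ ⟨xb, yb, hb, rfl⟩
    refine ⟨xa + xb, ya + yb, by rw [map_add, map_add, ha, hb, map_add], ?_⟩
    funext i; cases i <;> simp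
  neg_mem' := by
    rintro a ⟨x, y, hxy, rfl⟩
    refine ⟨-x, -y, by rw [map_neg, map_neg, hxy, map_neg], ?_⟩
    funext i; cases i <;> simp

lemma mem_glueGroup {p q : ℕ} {A : Matrix (Fin p) (Fin p) ℚ} {B : Matrix (Fin q) (Fin q) ℚ}
    {γ : disc A ≃+ disc B} {z : (Fin p ⊕ Fin q) → ℚ} :
    z ∈ glueGroup A B γ ↔ ∃ (x : Ldual A) (y : Ldual B),
      γ (dmk A x) = dmk B y ∧ z = Sum.elim (x : Fin p → ℚ) (y : Fin q → ℚ) := Iff.rfl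

end DiscForm

open DiscForm

/-- (Nikulin, Corollary 1.6.2.)  Let `S` and `K` be nondegenerate even lattices,
presented by symmetric Gram matrices `GS`, `GK` with nonzero determinant and even
norms.  There is a group isomorphism `γ : D_S → D_K` with `γ*q_K = −q_S`
(expressed on representatives: whenever `γ[x] = [y]`, `q_K(y) + q_S(x) ∈ 2ℤ`)
if and only if there is an even unimodular overlattice `N` of `S ⊕ K` into which
`S` and `K` are primitively embedded. -/
theorem stmt_10 (p q : ℕ)
    (GS : Matrix (Fin p) (Fin p) ℤ) (GK : Matrix (Fin q) (Fin q) ℤ)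
    (hSsym : GS.IsSymm) (hKsym : GK.IsSymm)
    (hSdet : GS.det ≠ 0) (hKdet : GK.det ≠ 0)
    (hSeven : ∀ v : Fin p → ℤ, Even (v ⬝ᵥ GS.mulVec v))
    (hKeven : ∀ v : Fin q → ℤ, Even (v ⬝ᵥ GK.mulVec v)) :
    (∃ γ : disc (GS.map ((↑) : ℤ → ℚ)) ≃+ disc (GK.map ((↑) : ℤ → ℚ)),
        ∀ (x : Ldual (GS.map ((↑) : ℤ → ℚ))) (y : Ldual (GK.map ((↑) : ℤ → ℚ))),
          γ (dmk _ x) = dmk _ y →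
            ∃ k : ℤ, pair (GK.map ((↑) : ℤ → ℚ)) y y
              + pair (GS.map ((↑) : ℤ → ℚ)) x x = 2 * k) ↔
      (∃ N : AddSubgroup ((Fin p ⊕ Fin q) → ℚ),
        -- `N` contains `S ⊕ K`
        L0 (Fin p ⊕ Fin q) ≤ N ∧
        -- `N` is even
        (∀ x ∈ N, ∃ k : ℤ,
          pair (Matrix.fromBlocks (GS.map ((↑) : ℤ → ℚ)) 0 0 (GK.map ((↑) : ℤ → ℚ)))
            x x = 2 * k) ∧
        -- `N` is unimodular: it equals its own dual
        (∀ x, x ∈ N ↔ ∀ y ∈ N, ∃ k : ℤ,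
          pair (Matrix.fromBlocks (GS.map ((↑) : ℤ → ℚ)) 0 0 (GK.map ((↑) : ℤ → ℚ)))
            x y = (k : ℚ)) ∧
        -- `S` is primitively embedded: `N ∩ (S ⊗ ℚ) = S`
        (∀ x ∈ N, (∀ j : Fin q, x (Sum.inr j) = 0) →
          ∀ i : Fin p, ∃ k : ℤ, x (Sum.inl i) = (k : ℚ)) ∧
        -- `K` is primitively embedded: `N ∩ (K ⊗ ℚ) = K`
        (∀ x ∈ N, (∀ i : Fin p, x (Sum.inl i) = 0) →
          ∀ j : Fin q, ∃ k : ℤ, x (Sum.inr j) = (k : ℚ))) := by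
  have hSq_symm : (GS.map ((↑) : ℤ → ℚ)).IsSymm := hSsym.map _
  have hKq_symm : (GK.map ((↑) : ℤ → ℚ)).IsSymm := hKsym.map _
  have hSq_det : IsUnit (GS.map ((↑) : ℤ → ℚ)).det := by
    rw [isUnit_iff_ne_zero]
    have : (GS.map ((↑) : ℤ → ℚ)).det = ((GS.det : ℤ) : ℚ) := by
      rw [show GS.map ((↑) : ℤ → ℚ) = (Int.castRingHom ℚ).mapMatrix GS from rfl,
        ← RingHom.map_det]
      rfl
    rw [this]
    exact_mod_cast hSdet
  have hKq_det : IsUnit (GK.map ((↑) : ℤ → ℚ)).det := by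
    rw [isUnit_iff_ne_zero]
    have : (GK.map ((↑) : ℤ → ℚ)).det = ((GK.det : ℤ) : ℚ) := by
      rw [show GK.map ((↑) : ℤ → ℚ) = (Int.castRingHom ℚ).mapMatrix GK from rfl,
        ← RingHom.map_det]
      rfl
    rw [this]
    exact_mod_cast hKdet
  have hGB_symm : (Matrix.fromBlocks (GS.map ((↑) : ℤ → ℚ)) 0 0
      (GK.map ((↑) : ℤ → ℚ))).IsSymm := fromBlocks_isSymm hSq_symm hKq_symm
  have hGB_int : L0 (Fin p ⊕ Fin q) ≤ Ldual (Matrix.fromBlocks (GS.map ((↑) : ℤ → ℚ)) 0 0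
      (GK.map ((↑) : ℤ → ℚ))) := by
    have he : Matrix.fromBlocks (GS.map ((↑) : ℤ → ℚ)) 0 0 (GK.map ((↑) : ℤ → ℚ))
        = (Matrix.fromBlocks GS 0 0 GK).map ((↑) : ℤ → ℚ) := by
      rw [Matrix.fromBlocks_map]
      congr 1 <;> ext i j <;> simp
    rw [he]
    exact L0_le_Ldual _
  constructor
  · -- γ exists ⇒ overlattice exists
    rintro ⟨γ, hγ⟩
    have hL0N : L0 (Fin p ⊕ Fin q) ≤ glueGroup _ _ γ := by
      rintro z ⟨u, rfl⟩
      refine ⟨⟨intChar _ (u ∘ Sum.inl), L0_le_Ldual GS ⟨u ∘ Sum.inl, rfl⟩⟩,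
              ⟨intChar _ (u ∘ Sum.inr), L0_le_Ldual GK ⟨u ∘ Sum.inr, rfl⟩⟩, ?_, ?_⟩
      · rw [(dmk_eq_zero_iff _ _).2 ⟨u ∘ Sum.inl, rfl⟩, map_zero,
          (dmk_eq_zero_iff _ _).2 ⟨u ∘ Sum.inr, rfl⟩]
      · funext i; cases i <;> rfl
    have hevenN : ∀ z ∈ glueGroup _ _ γ, ∃ k : ℤ,
        pair (Matrix.fromBlocks (GS.map ((↑) : ℤ → ℚ)) 0 0 (GK.map ((↑) : ℤ → ℚ)))
          z z = 2 * k := by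
      rintro z ⟨x, y, hxy, rfl⟩
      obtain ⟨k, hk⟩ := hγ x y hxy
      refine ⟨k, ?_⟩
      rw [pair_blocks]
      simp only [Sum.elim_comp_inl, Sum.elim_comp_inr]
      linarith
    have hint : ∀ z ∈ glueGroup _ _ γ, ∀ w ∈ glueGroup _ _ γ, ∃ k : ℤ,
        pair (Matrix.fromBlocks (GS.map ((↑) : ℤ → ℚ)) 0 0 (GK.map ((↑) : ℤ → ℚ)))
          z w = (k : ℚ) :=
      fun z hz w hw => pair_int_of_even _ hGB_symm hevenN hz hw
    refine ⟨glueGroup _ _ γ, hL0N, hevenN, ?_, ?_, ?_⟩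
    · -- unimodular
      intro z
      constructor
      · exact fun hz w hw => hint z hz w hw
      · intro hz
        have hx : z ∘ Sum.inl ∈ Ldual (GS.map ((↑) : ℤ → ℚ)) := by
          intro y hy
          obtain ⟨m, hm⟩ := hz (Sum.elim y 0) (hL0N (sum_elim_mem_L0 hy (zero_mem _)))
          refine ⟨m, ?_⟩
          rw [pair_blocks] at hm
          simpa [pair_zero_right] using hm
        have hy : z ∘ Sum.inr ∈ Ldual (GK.map ((↑) : ℤ → ℚ)) := by
          intro y hy
          obtain ⟨m, hm⟩ := hz (Sum.elim 0 y) (hL0N (sum_elim_mem_L0 (zero_mem _) hy))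
          refine ⟨m, ?_⟩
          rw [pair_blocks] at hm
          simpa [pair_zero_right] using hm
        obtain ⟨y₁, hy₁⟩ := QuotientAddGroup.mk'_surjective _
          (γ (dmk (GS.map ((↑) : ℤ → ℚ)) ⟨z ∘ Sum.inl, hx⟩))
        have hy₁' : dmk (GK.map ((↑) : ℤ → ℚ)) y₁
            = γ (dmk (GS.map ((↑) : ℤ → ℚ)) ⟨z ∘ Sum.inl, hx⟩) := hy₁
        have hdiff : (z ∘ Sum.inr) - (y₁ : Fin q → ℚ) ∈ L0 (Fin q) := by
          apply mem_L0_of_pair_int (GK.map ((↑) : ℤ → ℚ)) hKq_symm hKq_det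
          intro w hw
          obtain ⟨xw, hxw⟩ := QuotientAddGroup.mk'_surjective _
            (γ.symm (dmk (GK.map ((↑) : ℤ → ℚ)) ⟨w, hw⟩))
          have hgr : γ (dmk (GS.map ((↑) : ℤ → ℚ)) xw)
              = dmk (GK.map ((↑) : ℤ → ℚ)) ⟨w, hw⟩ := by
            rw [show dmk (GS.map ((↑) : ℤ → ℚ)) xw
                = γ.symm (dmk (GK.map ((↑) : ℤ → ℚ)) ⟨w, hw⟩) from hxw]
            exact γ.apply_symm_apply _
          have hzw : Sum.elim (xw : Fin p → ℚ) w ∈ glueGroup _ _ γ :=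
            ⟨xw, ⟨w, hw⟩, hgr, rfl⟩
          obtain ⟨m, hm⟩ := hz _ hzw
          rw [pair_blocks] at hm
          simp only [Sum.elim_comp_inl, Sum.elim_comp_inr] at hm
          obtain ⟨k1, hk1⟩ := hγ ⟨z ∘ Sum.inl, hx⟩ y₁ hy₁'.symm
          obtain ⟨k2, hk2⟩ := hγ xw ⟨w, hw⟩ hgr
          obtain ⟨k3, hk3⟩ := hγ (⟨z ∘ Sum.inl, hx⟩ + xw) (y₁ + ⟨w, hw⟩)
            (by rw [map_add, map_add, hgr, ← hy₁', ← map_add])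
          have hc1 : ((⟨z ∘ Sum.inl, hx⟩ + xw : Ldual (GS.map ((↑) : ℤ → ℚ)))
              : Fin p → ℚ) = (z ∘ Sum.inl) + (xw : Fin p → ℚ) := rfl
          have hc2 : ((y₁ + ⟨w, hw⟩ : Ldual (GK.map ((↑) : ℤ → ℚ)))
              : Fin q → ℚ) = (y₁ : Fin q → ℚ) + w := rfl
          rw [hc1, hc2] at hk3
          have e3 : pair (GK.map ((↑) : ℤ → ℚ)) ((y₁ : Fin q → ℚ) + w)
              ((y₁ : Fin q → ℚ) + w)
              = pair (GK.map ((↑) : ℤ → ℚ)) y₁ y₁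
                + 2 * pair (GK.map ((↑) : ℤ → ℚ)) y₁ w
                + pair (GK.map ((↑) : ℤ → ℚ)) w w := by
            rw [pair_add_left, pair_add_right, pair_add_right,
              pair_comm _ hKq_symm w (y₁ : Fin q → ℚ)]
            ring
          have e4 : pair (GS.map ((↑) : ℤ → ℚ)) ((z ∘ Sum.inl) + (xw : Fin p → ℚ))
              ((z ∘ Sum.inl) + (xw : Fin p → ℚ))
              = pair (GS.map ((↑) : ℤ → ℚ)) (z ∘ Sum.inl) (z ∘ Sum.inl)
                + 2 * pair (GS.map ((↑) : ℤ → ℚ)) (z ∘ Sum.inl) (xw : Fin p → ℚ)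
                + pair (GS.map ((↑) : ℤ → ℚ)) xw xw := by
            rw [pair_add_left, pair_add_right, pair_add_right,
              pair_comm _ hSq_symm (xw : Fin p → ℚ) (z ∘ Sum.inl)]
            ring
          rw [e3, e4] at hk3
          refine ⟨m - (k3 - k1 - k2), ?_⟩
          rw [pair_sub_left]
          push_cast
          linarith
        refine ⟨⟨z ∘ Sum.inl, hx⟩, ⟨z ∘ Sum.inr, hy⟩, ?_,
          (Sum.elim_comp_inl_inr z).symm⟩
        have := (dmk_eq_dmk_iff (GK.map ((↑) : ℤ → ℚ)) ⟨z ∘ Sum.inr, hy⟩ y₁).2 hdiff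
        rw [this]
        exact hy₁'.symm.symm.symm ▸ hy₁'
    · -- S primitively embedded
      rintro z ⟨x, y, hxy, rfl⟩ hz0 i
      have hy0 : (y : Fin q → ℚ) = 0 := funext fun j => hz0 j
      have hdy : dmk (GK.map ((↑) : ℤ → ℚ)) y = 0 :=
        (dmk_eq_zero_iff _ y).2 (by rw [hy0]; exact zero_mem _)
      rw [hdy] at hxy
      have hx0 : dmk (GS.map ((↑) : ℤ → ℚ)) x = 0 := by
        apply γ.injective
        rw [hxy, map_zero]
      obtain ⟨k, hk⟩ := mem_L0_iff.1 ((dmk_eq_zero_iff _ x).1 hx0) i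
      exact ⟨k, hk⟩
    · -- K primitively embedded
      rintro z ⟨x, y, hxy, rfl⟩ hz0 j
      have hx0 : (x : Fin p → ℚ) = 0 := funext fun i => hz0 i
      have hdx : dmk (GS.map ((↑) : ℤ → ℚ)) x = 0 :=
        (dmk_eq_zero_iff _ x).2 (by rw [hx0]; exact zero_mem _)
      rw [hdx, map_zero] at hxy
      obtain ⟨k, hk⟩ := mem_L0_iff.1 ((dmk_eq_zero_iff _ y).1 hxy.symm) j
      exact ⟨k, hk⟩
  · -- overlattice exists ⇒ γ exists
    rintro ⟨N, hL0N, hevenN, huni, hprimS, hprimK⟩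
    have compN : ∀ z ∈ N, (z ∘ Sum.inl ∈ Ldual (GS.map ((↑) : ℤ → ℚ)))
        ∧ (z ∘ Sum.inr ∈ Ldual (GK.map ((↑) : ℤ → ℚ))) := by
      intro z hz
      constructor
      · intro y hy
        obtain ⟨m, hm⟩ := (huni z).1 hz (Sum.elim y 0)
          (hL0N (sum_elim_mem_L0 hy (zero_mem _)))
        refine ⟨m, ?_⟩
        rw [pair_blocks] at hm
        simpa [pair_zero_right] using hm
      · intro y hy
        obtain ⟨m, hm⟩ := (huni z).1 hz (Sum.elim 0 y)
          (hL0N (sum_elim_mem_L0 (zero_mem _) hy))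
        refine ⟨m, ?_⟩
        rw [pair_blocks] at hm
        simpa [pair_zero_right] using hm
    have uniqK : ∀ z ∈ N, (z ∘ Sum.inl ∈ L0 (Fin p)) → z ∘ Sum.inr ∈ L0 (Fin q) := by
      intro z hz hzl
      obtain ⟨v, hv⟩ := hzl
      have hz' : z - intChar (Fin p ⊕ Fin q) (Sum.elim v (0 : Fin q → ℤ)) ∈ N := sub_mem hz (hL0N ⟨_, rfl⟩)
      have h0 : ∀ i, (z - intChar (Fin p ⊕ Fin q) (Sum.elim v (0 : Fin q → ℤ))) (Sum.inl i) = 0 := by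
        intro i
        have hzi : z (Sum.inl i) = (v i : ℚ) := (congrFun hv i).symm
        simp [hzi, intChar_apply]
      have hpr := hprimK _ hz' h0
      rw [mem_L0_iff]
      intro j
      obtain ⟨k, hk⟩ := hpr j
      refine ⟨k, ?_⟩
      have he : (z - intChar (Fin p ⊕ Fin q) (Sum.elim v (0 : Fin q → ℤ))) (Sum.inr j) = z (Sum.inr j) := by
        simp [intChar_apply]
      show z (Sum.inr j) = (k : ℚ)
      rw [← he, hk]
    have uniqS : ∀ z ∈ N, (z ∘ Sum.inr ∈ L0 (Fin q)) → z ∘ Sum.inl ∈ L0 (Fin p) := by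
      intro z hz hzr
      obtain ⟨v, hv⟩ := hzr
      have hz' : z - intChar (Fin p ⊕ Fin q) (Sum.elim (0 : Fin p → ℤ) v) ∈ N := sub_mem hz (hL0N ⟨_, rfl⟩)
      have h0 : ∀ j, (z - intChar (Fin p ⊕ Fin q) (Sum.elim (0 : Fin p → ℤ) v)) (Sum.inr j) = 0 := by
        intro j
        have hzj : z (Sum.inr j) = (v j : ℚ) := (congrFun hv j).symm
        simp [hzj, intChar_apply]
      have hpr := hprimS _ hz' h0
      rw [mem_L0_iff]
      intro i
      obtain ⟨k, hk⟩ := hpr i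
      refine ⟨k, ?_⟩
      have he : (z - intChar (Fin p ⊕ Fin q) (Sum.elim (0 : Fin p → ℤ) v)) (Sum.inl i) = z (Sum.inl i) := by
        simp [intChar_apply]
      show z (Sum.inl i) = (k : ℚ)
      rw [← he, hk]
    have surjS : ∀ x ∈ Ldual (GS.map ((↑) : ℤ → ℚ)), ∃ z ∈ N, z ∘ Sum.inl = x := by
      intro x hx
      have hmem := Ldual_le_of_perp (GS.map ((↑) : ℤ → ℚ)) hSq_symm hSq_det
        (N.map ({ toFun := fun z => z ∘ Sum.inl, map_zero' := rfl,
                  map_add' := fun _ _ => rfl } :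
          ((Fin p ⊕ Fin q) → ℚ) →+ (Fin p → ℚ)))
        (by rintro w ⟨z, hz, rfl⟩; exact (compN z hz).1)
        (by
          intro c hcint
          have hcN : Sum.elim c (0 : Fin q → ℚ) ∈ N := by
            rw [huni]
            intro w hw
            obtain ⟨m, hm⟩ := hcint (w ∘ Sum.inl) ⟨w, hw, rfl⟩
            refine ⟨m, ?_⟩
            rw [pair_blocks]
            simpa [pair_zero_left] using hm
          have hpr := hprimS _ hcN (fun j => rfl)
          rw [mem_L0_iff]
          exact fun i => hpr i)
        x hx
      obtain ⟨z, hz, hzx⟩ := hmem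
      exact ⟨z, hz, hzx⟩
    have surjK : ∀ y ∈ Ldual (GK.map ((↑) : ℤ → ℚ)), ∃ z ∈ N, z ∘ Sum.inr = y := by
      intro y hy
      have hmem := Ldual_le_of_perp (GK.map ((↑) : ℤ → ℚ)) hKq_symm hKq_det
        (N.map ({ toFun := fun z => z ∘ Sum.inr, map_zero' := rfl,
                  map_add' := fun _ _ => rfl } :
          ((Fin p ⊕ Fin q) → ℚ) →+ (Fin q → ℚ)))
        (by rintro w ⟨z, hz, rfl⟩; exact (compN z hz).2)
        (by
          intro c hcint
          have hcN : Sum.elim (0 : Fin p → ℚ) c ∈ N := by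
            rw [huni]
            intro w hw
            obtain ⟨m, hm⟩ := hcint (w ∘ Sum.inr) ⟨w, hw, rfl⟩
            refine ⟨m, ?_⟩
            rw [pair_blocks]
            simpa [pair_zero_left] using hm
          have hpr := hprimK _ hcN (fun i => rfl)
          rw [mem_L0_iff]
          exact fun j => hpr j)
        y hy
      obtain ⟨z, hz, hzy⟩ := hmem
      exact ⟨z, hz, hzy⟩
    -- the graph relation
    have exR : ∀ x : Ldual (GS.map ((↑) : ℤ → ℚ)), ∃ y : Ldual (GK.map ((↑) : ℤ → ℚ)),
        Sum.elim (x : Fin p → ℚ) (y : Fin q → ℚ) ∈ N := by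
      intro x
      obtain ⟨z, hz, hzl⟩ := surjS x x.2
      refine ⟨⟨z ∘ Sum.inr, (compN z hz).2⟩, ?_⟩
      show Sum.elim (x : Fin p → ℚ) (z ∘ Sum.inr) ∈ N
      rw [← hzl, Sum.elim_comp_inl_inr]
      exact hz
    have exR' : ∀ y : Ldual (GK.map ((↑) : ℤ → ℚ)), ∃ x : Ldual (GS.map ((↑) : ℤ → ℚ)),
        Sum.elim (x : Fin p → ℚ) (y : Fin q → ℚ) ∈ N := by
      intro y
      obtain ⟨z, hz, hzr⟩ := surjK y y.2
      refine ⟨⟨z ∘ Sum.inl, (compN z hz).1⟩, ?_⟩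
      show Sum.elim (z ∘ Sum.inl) (y : Fin q → ℚ) ∈ N
      rw [← hzr, Sum.elim_comp_inl_inr]
      exact hz
    have Rsub : ∀ {x x' : Ldual (GS.map ((↑) : ℤ → ℚ))} {y y' : Ldual (GK.map ((↑) : ℤ → ℚ))},
        Sum.elim (x : Fin p → ℚ) (y : Fin q → ℚ) ∈ N →
        Sum.elim (x' : Fin p → ℚ) (y' : Fin q → ℚ) ∈ N →
        Sum.elim ((x - x' : Ldual (GS.map ((↑) : ℤ → ℚ))) : Fin p → ℚ)
          ((y - y' : Ldual (GK.map ((↑) : ℤ → ℚ))) : Fin q → ℚ) ∈ N := by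
      intro x x' y y' h h'
      have he : Sum.elim ((x - x' : Ldual (GS.map ((↑) : ℤ → ℚ))) : Fin p → ℚ)
          ((y - y' : Ldual (GK.map ((↑) : ℤ → ℚ))) : Fin q → ℚ)
          = Sum.elim (x : Fin p → ℚ) (y : Fin q → ℚ)
            - Sum.elim (x' : Fin p → ℚ) (y' : Fin q → ℚ) := by
        funext i; cases i <;> simp
      rw [he]
      exact sub_mem h h'
    have RcongrK : ∀ {x x' : Ldual (GS.map ((↑) : ℤ → ℚ))} {y y' : Ldual (GK.map ((↑) : ℤ → ℚ))},
        Sum.elim (x : Fin p → ℚ) (y : Fin q → ℚ) ∈ N →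
        Sum.elim (x' : Fin p → ℚ) (y' : Fin q → ℚ) ∈ N →
        dmk _ x = dmk _ x' → dmk _ y = dmk _ y' := by
      intro x x' y y' h h' he
      have hsub := Rsub h h'
      have hl : (Sum.elim ((x - x' : Ldual (GS.map ((↑) : ℤ → ℚ))) : Fin p → ℚ)
          ((y - y' : Ldual (GK.map ((↑) : ℤ → ℚ))) : Fin q → ℚ)) ∘ Sum.inl ∈ L0 (Fin p) := by
        show ((x - x' : Ldual (GS.map ((↑) : ℤ → ℚ))) : Fin p → ℚ) ∈ L0 (Fin p)
        have := (dmk_eq_dmk_iff _ x x').1 he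
        simpa using this
      have hr := uniqK _ hsub hl
      rw [dmk_eq_dmk_iff]
      simpa using hr
    have RcongrS : ∀ {x x' : Ldual (GS.map ((↑) : ℤ → ℚ))} {y y' : Ldual (GK.map ((↑) : ℤ → ℚ))},
        Sum.elim (x : Fin p → ℚ) (y : Fin q → ℚ) ∈ N →
        Sum.elim (x' : Fin p → ℚ) (y' : Fin q → ℚ) ∈ N →
        dmk _ y = dmk _ y' → dmk _ x = dmk _ x' := by
      intro x x' y y' h h' he
      have hsub := Rsub h h'
      have hr : (Sum.elim ((x - x' : Ldual (GS.map ((↑) : ℤ → ℚ))) : Fin p → ℚ)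
          ((y - y' : Ldual (GK.map ((↑) : ℤ → ℚ))) : Fin q → ℚ)) ∘ Sum.inr ∈ L0 (Fin q) := by
        show ((y - y' : Ldual (GK.map ((↑) : ℤ → ℚ))) : Fin q → ℚ) ∈ L0 (Fin q)
        have := (dmk_eq_dmk_iff _ y y').1 he
        simpa using this
      have hl := uniqS _ hsub hr
      rw [dmk_eq_dmk_iff]
      simpa using hl
    choose fy hfy using exR
    choose gx hgx using exR'
    choose repS hrepS using QuotientAddGroup.mk'_surjective
      ((L0 (Fin p)).addSubgroupOf (Ldual (GS.map ((↑) : ℤ → ℚ))))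
    choose repK hrepK using QuotientAddGroup.mk'_surjective
      ((L0 (Fin q)).addSubgroupOf (Ldual (GK.map ((↑) : ℤ → ℚ))))
    have hrepS' : ∀ a, dmk (GS.map ((↑) : ℤ → ℚ)) (repS a) = a := hrepS
    have hrepK' : ∀ a, dmk (GK.map ((↑) : ℤ → ℚ)) (repK a) = a := hrepK
    have fSpec : ∀ (x : Ldual (GS.map ((↑) : ℤ → ℚ))) (y : Ldual (GK.map ((↑) : ℤ → ℚ))), Sum.elim (x : Fin p → ℚ) (y : Fin q → ℚ) ∈ N →
        dmk _ (fy (repS (dmk _ x))) = dmk _ y :=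
      fun x y h => RcongrK (hfy (repS (dmk _ x))) h (hrepS' _)
    have gSpec : ∀ (x : Ldual (GS.map ((↑) : ℤ → ℚ))) (y : Ldual (GK.map ((↑) : ℤ → ℚ))), Sum.elim (x : Fin p → ℚ) (y : Fin q → ℚ) ∈ N →
        dmk _ (gx (repK (dmk _ y))) = dmk _ x :=
      fun x y h => RcongrS (hgx (repK (dmk _ y))) h (hrepK' _)
    have fadd : ∀ a b, dmk (GK.map ((↑) : ℤ → ℚ)) (fy (repS (a + b)))
        = dmk _ (fy (repS a)) + dmk _ (fy (repS b)) := by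
      intro a b
      have hsum : Sum.elim ((repS a + repS b : Ldual (GS.map ((↑) : ℤ → ℚ))) : Fin p → ℚ)
          ((fy (repS a) + fy (repS b) : Ldual (GK.map ((↑) : ℤ → ℚ))) : Fin q → ℚ) ∈ N := by
        have he : Sum.elim ((repS a + repS b : Ldual (GS.map ((↑) : ℤ → ℚ))) : Fin p → ℚ)
            ((fy (repS a) + fy (repS b) : Ldual (GK.map ((↑) : ℤ → ℚ))) : Fin q → ℚ)
            = Sum.elim ((repS a : Ldual (GS.map ((↑) : ℤ → ℚ))) : Fin p → ℚ) (fy (repS a) : Fin q → ℚ)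
              + Sum.elim ((repS b : Ldual (GS.map ((↑) : ℤ → ℚ))) : Fin p → ℚ) (fy (repS b) : Fin q → ℚ) := by
          funext i; cases i <;> simp
        rw [he]
        exact add_mem (hfy _) (hfy _)
      have hd : dmk (GS.map ((↑) : ℤ → ℚ)) (repS a + repS b) = a + b := by
        rw [map_add, hrepS', hrepS']; rfl
      have := RcongrK (hfy (repS (a + b))) hsum (by rw [hrepS', hd])
      rw [this, map_add]
    refine ⟨AddEquiv.mk' ⟨fun a => dmk _ (fy (repS a)), fun b => dmk _ (gx (repK b)),
      ?_, ?_⟩ fadd, ?_⟩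
    · -- left inverse
      intro a
      show dmk _ (gx (repK (dmk _ (fy (repS a))))) = a
      rw [gSpec (repS a) (fy (repS a)) (hfy _)]; exact hrepS' a
    · -- right inverse
      intro b
      show dmk _ (fy (repS (dmk _ (gx (repK b))))) = b
      rw [fSpec (gx (repK b)) (repK b) (hgx _)]; exact hrepK' b
    · -- the quadratic condition
      intro x y h
      have h' : dmk (GK.map ((↑) : ℤ → ℚ)) (fy (repS (dmk _ x)))
          = dmk (GK.map ((↑) : ℤ → ℚ)) y := h
      have hxx : (x : Fin p → ℚ) - (repS (dmk _ x) : Fin p → ℚ) ∈ L0 (Fin p) := by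
        have := (dmk_eq_dmk_iff _ x (repS (dmk _ x))).1 (hrepS' _).symm
        exact this
      have hyy : (y : Fin q → ℚ) - (fy (repS (dmk _ x)) : Fin q → ℚ) ∈ L0 (Fin q) := by
        have := (dmk_eq_dmk_iff _ y (fy (repS (dmk _ x)))).1 h'.symm
        exact this
      have hZ : Sum.elim (x : Fin p → ℚ) (y : Fin q → ℚ) ∈ N := by
        have he : Sum.elim (x : Fin p → ℚ) (y : Fin q → ℚ)
            = Sum.elim ((repS (dmk _ x) : Ldual (GS.map ((↑) : ℤ → ℚ))) : Fin p → ℚ)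
                (fy (repS (dmk _ x)) : Fin q → ℚ)
              + Sum.elim ((x : Fin p → ℚ) - (repS (dmk _ x) : Fin p → ℚ))
                  ((y : Fin q → ℚ) - (fy (repS (dmk _ x)) : Fin q → ℚ)) := by
          funext i; cases i <;> simp
        rw [he]
        exact add_mem (hfy _) (hL0N (sum_elim_mem_L0 hxx hyy))
      obtain ⟨k, hk⟩ := hevenN _ hZ
      refine ⟨k, ?_⟩
      rw [pair_blocks] at hk
      simp only [Sum.elim_comp_inl, Sum.elim_comp_inr] at hk
      linarith
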